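/- There exists an absolute constant C > 0 with the following property. For every real Q ≥ 2, every real D ≥ 1 and every real m₀ ≥ 1: #{q ∈ ℤ : Q ≤ q < 2Q, σ_D(q) ≥ m₀} ≤ C m₀^{−2} Q log Q, where σ_D(q) = #{d : d | q, D ≤ d ≤ 8D}. -/

import Mathlib

lemma sum_inv_mult_le (D : ℝ) (hD : 1 ≤ D) (g : ℕ) (hg : 1 ≤ g) :
    ∑ d ∈ (Finset.Icc ⌈D⌉₊ ⌊8*D⌋₊).filter (g ∣ ·), ((d:ℝ))⁻¹ ≤ 15 / g := by
  set Tg := (Finset.Icc ⌈D⌉₊ ⌊8*D⌋₊).filter (g ∣ ·) with hTg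
  have hg0 : (0:ℝ) < g := by exact_mod_cast hg
  have hD0 : (0:ℝ) < D := by linarith
  have hmem : ∀ d ∈ Tg, D ≤ (d:ℝ) ∧ (d:ℝ) ≤ 8*D ∧ g ∣ d := by
    intro d hd
    simp only [hTg, Finset.mem_filter, Finset.mem_Icc] at hd
    exact ⟨(Nat.ceil_le).mp hd.1.1, (Nat.le_floor_iff (by positivity)).mp hd.1.2, hd.2⟩
  rcases Tg.eq_empty_or_nonempty with he | hne
  · rw [he]; simp; positivity
  obtain ⟨d₀, hd₀⟩ := hne
  obtain ⟨h₀1, h₀2, h₀3⟩ := hmem d₀ hd₀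
  have hd₀pos : 0 < d₀ := by exact_mod_cast lt_of_lt_of_le hD0 h₀1
  have hgle : (g:ℝ) ≤ 8*D := by
    have : g ≤ d₀ := Nat.le_of_dvd hd₀pos h₀3
    calc (g:ℝ) ≤ d₀ := by exact_mod_cast this
    _ ≤ 8*D := h₀2
  -- card bound
  have hcard : (Tg.card : ℝ) ≤ 7*D/g + 1 := by
    have hsub : Tg.card ≤ (Finset.Icc ⌈D/g⌉₊ ⌊8*D/g⌋₊).card := by
      apply Finset.card_le_card_of_injOn (fun d => d / g)
      · intro d hd
        obtain ⟨h1, h2, h3⟩ := hmem d hd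
        have hq : ((d/g : ℕ):ℝ) = (d:ℝ)/g :=
          Nat.cast_div h3 (by exact_mod_cast hg0.ne')
        simp only [Finset.mem_coe, Finset.mem_Icc]
        refine ⟨Nat.ceil_le.mpr ?_, Nat.le_floor ?_⟩
        · rw [hq]; exact div_le_div_of_nonneg_right h1 hg0.le |>.trans_eq rfl
        · rw [hq]; exact div_le_div_of_nonneg_right h2 hg0.le |>.trans_eq rfl
      · intro a ha b hb hab
        have h3a := (hmem a ha).2.2
        have h3b := (hmem b hb).2.2
        simp only at hab
        rw [← Nat.div_mul_cancel h3a, ← Nat.div_mul_cancel h3b, hab]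
    have hIcc : ((Finset.Icc ⌈D/g⌉₊ ⌊8*D/g⌋₊).card : ℝ) ≤ 7*D/g + 1 := by
      rw [Nat.card_Icc]
      rcases le_or_gt ⌈D/g⌉₊ (⌊8*D/g⌋₊ + 1) with h | h
      · rw [Nat.cast_sub h]
        have h1 : ((⌊8*D/g⌋₊:ℝ)) ≤ 8*D/g := Nat.floor_le (by positivity)
        have h2 : D/g ≤ (⌈D/g⌉₊:ℝ) := Nat.le_ceil _
        push_cast
        have : 8*D/g - D/g = 7*D/g := by ring
        linarith
      · rw [Nat.sub_eq_zero_of_le h.le]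
        have : (0:ℝ) ≤ 7*D/g := by positivity
        simpa using by linarith
    exact (Nat.cast_le.mpr hsub).trans hIcc
  -- each term ≤ 1/D
  have hterm : ∀ d ∈ Tg, ((d:ℝ))⁻¹ ≤ 1/D := by
    intro d hd
    have h1 := (hmem d hd).1
    rw [one_div]
    exact inv_anti₀ hD0 h1
  calc ∑ d ∈ Tg, ((d:ℝ))⁻¹ ≤ ∑ _d ∈ Tg, 1/D := Finset.sum_le_sum hterm
  _ = Tg.card * (1/D) := by rw [Finset.sum_const, nsmul_eq_mul]
  _ ≤ (7*D/g + 1) * (1/D) := by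
      apply mul_le_mul_of_nonneg_right hcard (by positivity)
  _ = 7/g + 1/D := by field_simp
  _ ≤ 7/g + 8/g := by
      have : 1/D ≤ 8/g := by
        rw [div_le_div_iff₀ hD0 hg0]; linarith
      linarith
  _ = 15/g := by ring

lemma pair_sum_le (D : ℝ) (hD : 1 ≤ D) :
    ∑ d1 ∈ Finset.Icc ⌈D⌉₊ ⌊8*D⌋₊, ∑ d2 ∈ Finset.Icc ⌈D⌉₊ ⌊8*D⌋₊,
      (Nat.gcd d1 d2 : ℝ) / (d1 * d2) ≤ 225 * (1 + Real.log (8*D)) := by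
  set T := Finset.Icc ⌈D⌉₊ ⌊8*D⌋₊ with hT
  set M := ⌊8*D⌋₊ with hM
  have hD0 : (0:ℝ) < D := by linarith
  have hM8 : 8 ≤ M := by
    rw [hM]; exact Nat.le_floor (by push_cast; linarith)
  have hTpos : ∀ d ∈ T, 1 ≤ d := by
    intro d hd
    rw [hT, Finset.mem_Icc] at hd
    have : 1 ≤ ⌈D⌉₊ := Nat.one_le_ceil_iff.mpr hD0
    omega
  have hmaps : ∀ p ∈ T ×ˢ T, Nat.gcd p.1 p.2 ∈ Finset.Icc 1 M := by
    intro p hp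
    rw [Finset.mem_product] at hp
    have h1 := hTpos _ hp.1
    have h2 : p.1 ≤ M := by
      have := (Finset.mem_Icc.mp hp.1).2; exact this
    rw [Finset.mem_Icc]
    constructor
    · have : 0 < Nat.gcd p.1 p.2 := Nat.gcd_pos_of_pos_left _ (by omega)
      omega
    · exact le_trans (Nat.gcd_le_left _ (by omega)) h2
  rw [← Finset.sum_product']
  rw [← Finset.sum_fiberwise_of_maps_to hmaps (fun p => (Nat.gcd p.1 p.2 : ℝ) / (p.1 * p.2))]
  have inner_le : ∀ g ∈ Finset.Icc 1 M,
      ∑ p ∈ (T ×ˢ T).filter (fun p => Nat.gcd p.1 p.2 = g),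
        (Nat.gcd p.1 p.2 : ℝ) / (p.1 * p.2) ≤ 225 / g := by
    intro g hg
    rw [Finset.mem_Icc] at hg
    have hg1 : 1 ≤ g := hg.1
    have hg0 : (0:ℝ) < g := by exact_mod_cast hg1
    set Tg := T.filter (g ∣ ·) with hTgdef
    have step1 : ∑ p ∈ (T ×ˢ T).filter (fun p => Nat.gcd p.1 p.2 = g),
        (Nat.gcd p.1 p.2 : ℝ) / (p.1 * p.2)
        ≤ ∑ p ∈ Tg ×ˢ Tg, (g:ℝ) / (p.1 * p.2) := by
      rw [Finset.sum_congr rfl (fun p hp => ?_)]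
      · apply Finset.sum_le_sum_of_subset_of_nonneg
        · intro p hp
          rw [Finset.mem_filter, Finset.mem_product] at hp
          obtain ⟨⟨h1, h2⟩, h3⟩ := hp
          rw [Finset.mem_product, hTgdef, Finset.mem_filter, Finset.mem_filter]
          exact ⟨⟨h1, h3 ▸ Nat.gcd_dvd_left _ _⟩, ⟨h2, h3 ▸ Nat.gcd_dvd_right _ _⟩⟩
        · intro p _ _; positivity
      · rw [Finset.mem_filter] at hp
        rw [hp.2]
    have step2 : ∑ p ∈ Tg ×ˢ Tg, (g:ℝ) / (p.1 * p.2)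
        = (g:ℝ) * ((∑ d ∈ Tg, (d:ℝ)⁻¹) * (∑ d ∈ Tg, (d:ℝ)⁻¹)) := by
      rw [Finset.sum_product]
      calc ∑ d1 ∈ Tg, ∑ d2 ∈ Tg, (g:ℝ)/(d1*d2)
          = ∑ d1 ∈ Tg, ((g:ℝ) * (d1:ℝ)⁻¹) * ∑ d2 ∈ Tg, (d2:ℝ)⁻¹ := by
            refine Finset.sum_congr rfl fun d1 _ => ?_
            rw [Finset.mul_sum]
            refine Finset.sum_congr rfl fun d2 _ => ?_
            rw [div_eq_mul_inv, mul_inv]; ring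
        _ = _ := by rw [← Finset.sum_mul, ← Finset.mul_sum]; ring
    have hS := sum_inv_mult_le D hD g hg1
    have hS0 : 0 ≤ ∑ d ∈ Tg, (d:ℝ)⁻¹ := Finset.sum_nonneg fun d _ => by positivity
    calc _ ≤ ∑ p ∈ Tg ×ˢ Tg, (g:ℝ) / (p.1 * p.2) := step1
      _ = (g:ℝ) * ((∑ d ∈ Tg, (d:ℝ)⁻¹) * (∑ d ∈ Tg, (d:ℝ)⁻¹)) := step2
      _ ≤ (g:ℝ) * ((15/g) * (15/g)) := by
          apply mul_le_mul_of_nonneg_left _ hg0.le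
          exact mul_le_mul hS hS hS0 (by positivity)
      _ = 225 / g := by field_simp; ring
  calc _ ≤ ∑ g ∈ Finset.Icc 1 M, (225:ℝ) / g := Finset.sum_le_sum inner_le
    _ = 225 * ∑ g ∈ Finset.Icc 1 M, ((g:ℝ))⁻¹ := by
        rw [Finset.mul_sum]
        exact Finset.sum_congr rfl fun g _ => by rw [div_eq_mul_inv]
    _ = 225 * (harmonic M : ℝ) := by
        rw [harmonic_eq_sum_Icc]; push_cast; ring
    _ ≤ 225 * (1 + Real.log M) := by
        have := harmonic_le_one_add_log M
        linarith
    _ ≤ 225 * (1 + Real.log (8*D)) := by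
        have hlog : Real.log M ≤ Real.log (8*D) := by
          apply Real.log_le_log (by positivity)
          exact Nat.floor_le (by positivity)
        linarith

/-- `σ_D(q)` is the number of divisors `d` of `q` with `D ≤ d ≤ 8D`. -/
noncomputable def sigmaD (D : ℝ) (q : ℕ) : ℕ :=
  (q.divisors.filter (fun d : ℕ => D ≤ (d : ℝ) ∧ (d : ℝ) ≤ 8 * D)).card

/-- There is an absolute constant `C > 0` such that for all reals `Q ≥ 2`, `D ≥ 1`
and `m₀ ≥ 1`, the number of integers `Q ≤ q < 2Q` with `σ_D(q) ≥ m₀` is at most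
`C m₀^{-2} Q log Q`. -/
theorem second_moment_divisor_count :
    ∃ C : ℝ, 0 < C ∧
      ∀ Q D m₀ : ℝ, 2 ≤ Q → 1 ≤ D → 1 ≤ m₀ →
        (Set.ncard {q : ℕ | Q ≤ (q : ℝ) ∧ (q : ℝ) < 2 * Q ∧
            m₀ ≤ (sigmaD D q : ℝ)} : ℝ) ≤
          C * m₀⁻¹ ^ 2 * Q * Real.log Q := by
  refine ⟨3150, by norm_num, fun Q D m₀ hQ hD hm => ?_⟩
  have hQ0 : (0:ℝ) < Q := by linarith
  have hm0 : (0:ℝ) < m₀ := by linarith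
  have hD0 : (0:ℝ) < D := by linarith
  have hlogQ : 0 < Real.log Q := Real.log_pos (by linarith)
  have hRHS : 0 ≤ (3150:ℝ) * m₀⁻¹ ^ 2 * Q * Real.log Q := by positivity
  set S := {q : ℕ | Q ≤ (q : ℝ) ∧ (q : ℝ) < 2 * Q ∧ m₀ ≤ (sigmaD D q : ℝ)} with hS
  by_cases hDQ : D < 2*Q
  swap
  · -- S is empty
    have hSe : S = ∅ := by
      rw [hS, Set.eq_empty_iff_forall_notMem]
      rintro q ⟨h1, h2, h3⟩
      have hσ : 1 ≤ sigmaD D q := by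
        by_contra h
        push_neg at h
        interval_cases hσ' : sigmaD D q
        · norm_num at h3; linarith
      obtain ⟨d, hd⟩ := Finset.card_pos.mp hσ
      simp only [sigmaD, Finset.mem_filter, Nat.mem_divisors] at hd
      obtain ⟨⟨hdq, hq0⟩, hDd, _⟩ := hd
      have : (d:ℝ) ≤ q := by
        exact_mod_cast Nat.le_of_dvd (Nat.pos_of_ne_zero hq0) hdq
      linarith
    rw [hSe]; simpa using hRHS
  -- main case
  set N := ⌊2*Q⌋₊ with hN
  set T := Finset.Icc ⌈D⌉₊ ⌊8*D⌋₊ with hT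
  set J := (Finset.Ioc 0 N).filter (fun q : ℕ => Q ≤ (q:ℝ) ∧ (q:ℝ) < 2*Q) with hJ
  set Jf := J.filter (fun q : ℕ => m₀ ≤ (sigmaD D q : ℝ)) with hJf
  have hSJ : S = ↑Jf := by
    ext q
    simp only [hS, Set.mem_setOf_eq, hJf, hJ, Finset.coe_filter, Finset.mem_filter,
      Finset.mem_Ioc, Set.mem_setOf_eq]
    constructor
    · rintro ⟨h1, h2, h3⟩
      refine ⟨⟨⟨?_, ?_⟩, h1, h2⟩, h3⟩
      · by_contra h; push_neg at h
        interval_cases q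
        · norm_num at h1; linarith
      · exact Nat.le_floor h2.le
    · rintro ⟨⟨_, h1, h2⟩, h3⟩
      exact ⟨h1, h2, h3⟩
  rw [hSJ, Set.ncard_coe_finset]
  -- Chebyshev
  have cheb : m₀^2 * Jf.card ≤ ∑ q ∈ J, ((sigmaD D q : ℝ))^2 := by
    calc m₀^2 * Jf.card = ∑ _q ∈ Jf, m₀^2 := by
          rw [Finset.sum_const, nsmul_eq_mul]; ring
      _ ≤ ∑ q ∈ Jf, ((sigmaD D q : ℝ))^2 := by
          apply Finset.sum_le_sum
          intro q hq
          rw [hJf, Finset.mem_filter] at hq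
          exact pow_le_pow_left₀ hm0.le hq.2 2
      _ ≤ ∑ q ∈ J, ((sigmaD D q : ℝ))^2 := by
          apply Finset.sum_le_sum_of_subset_of_nonneg (Finset.filter_subset _ _)
          intro q _ _; positivity
  -- rewrite sigmaD on J
  have hσ : ∀ q ∈ J, (sigmaD D q : ℝ) = ((T.filter (· ∣ q)).card : ℝ) := by
    intro q hq
    rw [hJ, Finset.mem_filter, Finset.mem_Ioc] at hq
    have hq0 : q ≠ 0 := by omega
    congr 1
    rw [sigmaD]
    congr 1
    ext d
    simp only [Finset.mem_filter, Nat.mem_divisors, hT, Finset.mem_Icc,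
      Nat.ceil_le, Nat.le_floor_iff (by positivity : (0:ℝ) ≤ 8*D)]
    tauto
  -- second moment expansion
  have expand : ∑ q ∈ J, ((sigmaD D q : ℝ))^2
      = ∑ d1 ∈ T, ∑ d2 ∈ T, ((J.filter (fun q => d1 ∣ q ∧ d2 ∣ q)).card : ℝ) := by
    have e1 : ∀ q ∈ J, ((sigmaD D q : ℝ))^2
        = ∑ d1 ∈ T, ∑ d2 ∈ T, (if d1 ∣ q ∧ d2 ∣ q then (1:ℝ) else 0) := by
      intro q hq
      rw [hσ q hq, sq, ← Finset.sum_boole, Finset.sum_mul_sum]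
      refine Finset.sum_congr rfl fun d1 _ => Finset.sum_congr rfl fun d2 _ => ?_
      by_cases h1 : d1 ∣ q <;> by_cases h2 : d2 ∣ q <;> simp [h1, h2]
    rw [Finset.sum_congr rfl e1, Finset.sum_comm]
    refine Finset.sum_congr rfl fun d1 _ => ?_
    rw [Finset.sum_comm]
    refine Finset.sum_congr rfl fun d2 _ => ?_
    rw [Finset.sum_boole]
  -- count multiples
  have hTpos : ∀ d ∈ T, 0 < d := by
    intro d hd
    rw [hT, Finset.mem_Icc] at hd
    have : 1 ≤ ⌈D⌉₊ := Nat.one_le_ceil_iff.mpr hD0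
    omega
  have count : ∀ d1 ∈ T, ∀ d2 ∈ T,
      ((J.filter (fun q => d1 ∣ q ∧ d2 ∣ q)).card : ℝ)
        ≤ 2*Q * (Nat.gcd d1 d2 : ℝ) / (d1 * d2) := by
    intro d1 h1 d2 h2
    have hp1 := hTpos d1 h1
    have hp2 := hTpos d2 h2
    set L := Nat.lcm d1 d2 with hL
    have hL0 : 0 < L := Nat.lcm_pos hp1 hp2
    have hsub : (J.filter (fun q => d1 ∣ q ∧ d2 ∣ q)) ⊆ (Finset.Ioc 0 N).filter (L ∣ ·) := by
      intro q hq
      rw [Finset.mem_filter, hJ, Finset.mem_filter] at hq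
      rw [Finset.mem_filter]
      exact ⟨hq.1.1, Nat.lcm_dvd hq.2.1 hq.2.2⟩
    have hcount : ((J.filter (fun q => d1 ∣ q ∧ d2 ∣ q)).card : ℝ) ≤ ((N / L : ℕ) : ℝ) := by
      exact_mod_cast Finset.card_le_card hsub |>.trans
        (Nat.Ioc_filter_dvd_card_eq_div N L).le
    have hNQ : (N:ℝ) ≤ 2*Q := Nat.floor_le (by positivity)
    have hLpos : (0:ℝ) < L := by exact_mod_cast hL0
    calc ((J.filter (fun q => d1 ∣ q ∧ d2 ∣ q)).card : ℝ)
        ≤ ((N / L : ℕ) : ℝ) := hcount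
      _ ≤ (N:ℝ) / L := Nat.cast_div_le
      _ ≤ 2*Q / L := by apply div_le_div_of_nonneg_right hNQ hLpos.le |>.trans_eq rfl
      _ = 2*Q * (Nat.gcd d1 d2 : ℝ) / (d1 * d2) := by
          have hid : (Nat.gcd d1 d2 : ℝ) * L = (d1:ℝ) * d2 := by
            exact_mod_cast congrArg (Nat.cast : ℕ → ℝ) (Nat.gcd_mul_lcm d1 d2)
          have hg0 : (0:ℝ) < Nat.gcd d1 d2 := by
            exact_mod_cast Nat.gcd_pos_of_pos_left d2 hp1
          field_simp
          nlinarith [hid]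
  -- put together
  have key : ∑ q ∈ J, ((sigmaD D q : ℝ))^2 ≤ 3150 * Q * Real.log Q := by
    rw [expand]
    have step : ∑ d1 ∈ T, ∑ d2 ∈ T, ((J.filter (fun q => d1 ∣ q ∧ d2 ∣ q)).card : ℝ)
        ≤ ∑ d1 ∈ T, ∑ d2 ∈ T, 2*Q * (Nat.gcd d1 d2 : ℝ) / (d1 * d2) :=
      Finset.sum_le_sum fun d1 h1 => Finset.sum_le_sum fun d2 h2 => count d1 h1 d2 h2
    have step2 : ∑ d1 ∈ T, ∑ d2 ∈ T, 2*Q * (Nat.gcd d1 d2 : ℝ) / (d1 * d2)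
        = 2*Q * ∑ d1 ∈ T, ∑ d2 ∈ T, (Nat.gcd d1 d2 : ℝ) / (d1 * d2) := by
      rw [Finset.mul_sum]
      refine Finset.sum_congr rfl fun d1 _ => ?_
      rw [Finset.mul_sum]
      refine Finset.sum_congr rfl fun d2 _ => ?_
      ring
    have hpair := pair_sum_le D hD
    have hlog8D : 1 + Real.log (8*D) ≤ 7 * Real.log Q := by
      have h1 : Real.log (8*D) ≤ Real.log (16*Q) := by
        apply Real.log_le_log (by positivity)
        linarith
      have h2 : Real.log (16*Q) = Real.log 16 + Real.log Q :=
        Real.log_mul (by norm_num) hQ0.ne'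
      have h3 : Real.log 16 = 4 * Real.log 2 := by
        rw [show (16:ℝ) = 2^4 by norm_num, Real.log_pow]; push_cast; ring
      have h4 : Real.log 2 ≤ Real.log Q := Real.log_le_log (by norm_num) hQ
      have h5 : (0.6931471803:ℝ) < Real.log 2 := Real.log_two_gt_d9
      linarith
    calc ∑ d1 ∈ T, ∑ d2 ∈ T, ((J.filter (fun q => d1 ∣ q ∧ d2 ∣ q)).card : ℝ)
        ≤ 2*Q * ∑ d1 ∈ T, ∑ d2 ∈ T, (Nat.gcd d1 d2 : ℝ) / (d1 * d2) := by
          rw [← step2]; exact step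
      _ ≤ 2*Q * (225 * (1 + Real.log (8*D))) := by
          apply mul_le_mul_of_nonneg_left hpair (by positivity)
      _ ≤ 2*Q * (225 * (7 * Real.log Q)) := by
          have h225 : (0:ℝ) ≤ 225 := by norm_num
          nlinarith [hlog8D, hQ0]
      _ = 3150 * Q * Real.log Q := by ring
  -- finish
  have : (Jf.card : ℝ) ≤ m₀⁻¹^2 * (3150 * Q * Real.log Q) := by
    rw [inv_pow]
    rw [inv_mul_eq_div, le_div_iff₀ (by positivity)]
    calc (Jf.card:ℝ) * m₀^2 = m₀^2 * Jf.card := by ring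
      _ ≤ ∑ q ∈ J, ((sigmaD D q : ℝ))^2 := cheb
      _ ≤ 3150 * Q * Real.log Q := key
  linarith [this]
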